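/- Let (Ω, μ) be a measure space, 1 < p < ∞ with conjugate exponent q, let 1 < r ≤ min{p, q} and s the conjugate exponent of r. Let M, N ⊆ L^p(Ω, μ), A : M → L^p(Ω, μ), B : N → L^p(Ω, μ) arbitrary maps, f ∈ M ∩ N, a, b ∈ ℂ. Then for every bounded linear functional φ on L^p(Ω, μ) with ‖φ‖ ≤ 1 and φ(f) = 0: ‖Af − a·f‖_p^s + ‖Bf − b·f‖_p^s ≥ (1/2^{s−1})(|φ(Af + Bf)|^s + |φ(Af − Bf)|^s). -/

import Mathlib

open MeasureTheory Real NNReal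

/-- Key `ℝ≥0` inequality: if `x² + y² = 2(a² + b²)` then for `s ≥ 2`,
`x^s + y^s ≤ 2^(s-1) (a^s + b^s)`. -/
lemma nnreal_clarkson_aux {s : ℝ} (hs : 2 ≤ s) {x y a b : ℝ≥0}
    (h : x ^ (2 : ℝ) + y ^ (2 : ℝ) = 2 * (a ^ (2 : ℝ) + b ^ (2 : ℝ))) :
    x ^ s + y ^ s ≤ 2 ^ (s - 1) * (a ^ s + b ^ s) := by
  have h2 : (1 : ℝ) ≤ s / 2 := by linarith
  have hx : x ^ s = (x ^ (2 : ℝ)) ^ (s / 2) := by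
    rw [← NNReal.rpow_mul]; congr 1; ring
  have hy : y ^ s = (y ^ (2 : ℝ)) ^ (s / 2) := by
    rw [← NNReal.rpow_mul]; congr 1; ring
  have ha : a ^ s = (a ^ (2 : ℝ)) ^ (s / 2) := by
    rw [← NNReal.rpow_mul]; congr 1; ring
  have hb : b ^ s = (b ^ (2 : ℝ)) ^ (s / 2) := by
    rw [← NNReal.rpow_mul]; congr 1; ring
  calc x ^ s + y ^ s ≤ (x ^ (2 : ℝ) + y ^ (2 : ℝ)) ^ (s / 2) := by
        rw [hx, hy]; exact NNReal.add_rpow_le_rpow_add _ _ h2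
    _ = 2 ^ (s / 2) * (a ^ (2 : ℝ) + b ^ (2 : ℝ)) ^ (s / 2) := by
        rw [h, NNReal.mul_rpow]
    _ ≤ 2 ^ (s / 2) * (2 ^ (s / 2 - 1) * ((a ^ (2 : ℝ)) ^ (s / 2) + (b ^ (2 : ℝ)) ^ (s / 2))) := by
        gcongr
        exact NNReal.rpow_add_le_mul_rpow_add_rpow _ _ h2
    _ = 2 ^ (s - 1) * (a ^ s + b ^ s) := by
        rw [ha, hb, ← mul_assoc, ← NNReal.rpow_add two_ne_zero]
        ring_nf

/-- Clarkson-type inequality for complex scalars, `s ≥ 2`. -/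
lemma complex_clarkson_aux {s : ℝ} (hs : 2 ≤ s) (z w : ℂ) :
    ‖z + w‖ ^ s + ‖z - w‖ ^ s ≤ 2 ^ (s - 1) * (‖z‖ ^ s + ‖w‖ ^ s) := by
  have hpar := parallelogram_law_with_nnnorm ℂ z w
  have key : ‖z + w‖₊ ^ s + ‖z - w‖₊ ^ s ≤ 2 ^ (s - 1) * (‖z‖₊ ^ s + ‖w‖₊ ^ s) := by
    apply nnreal_clarkson_aux hs
    have e : ∀ u : ℂ, ‖u‖₊ ^ (2:ℝ) = ‖u‖₊ * ‖u‖₊ := fun u => by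
      rw [show (2:ℝ) = ((2:ℕ):ℝ) by norm_num, NNReal.rpow_natCast]; ring
    rw [e, e, e, e]; simpa only [sq] using hpar
  have := NNReal.coe_le_coe.2 key
  push_cast [NNReal.coe_rpow] at this
  simpa [coe_nnnorm] using this

theorem nonlinear_maccone_pati_generalized_clarkson_s
    {Ω : Type*} [MeasurableSpace Ω] (μ : Measure Ω) (p q r s : ℝ)
    (hp1 : 1 < p) (hq : q = p / (p - 1))
    (hr1 : 1 < r) (hr2 : r ≤ min p q) (hs : s = r / (r - 1)) [Fact (1 ≤ ENNReal.ofReal p)]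
    (M N : Set (Lp ℂ (ENNReal.ofReal p) μ))
    (A : M → Lp ℂ (ENNReal.ofReal p) μ) (B : N → Lp ℂ (ENNReal.ofReal p) μ)
    (f : Lp ℂ (ENNReal.ofReal p) μ) (hfM : f ∈ M) (hfN : f ∈ N) (a b : ℂ)
    (φ : Lp ℂ (ENNReal.ofReal p) μ →L[ℂ] ℂ) (hφ : ‖φ‖ ≤ 1) (hφf : φ f = 0) :
    ‖A ⟨f, hfM⟩ - a • f‖ ^ s + ‖B ⟨f, hfN⟩ - b • f‖ ^ s ≥
      (1 / 2 ^ (s - 1)) *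
        (‖φ (A ⟨f, hfM⟩ + B ⟨f, hfN⟩)‖ ^ s + ‖φ (A ⟨f, hfM⟩ - B ⟨f, hfN⟩)‖ ^ s) := by
  -- s ≥ 2
  have hp0 : 0 < p - 1 := by linarith
  have hminq : min p q ≤ 2 := by
    rcases le_or_gt p 2 with h | h
    · exact le_trans (min_le_left _ _) h
    · refine le_trans (min_le_right _ _) ?_
      rw [hq, div_le_iff₀ hp0]; linarith
  have hr2' : r ≤ 2 := le_trans hr2 hminq
  have hrs : 0 < r - 1 := by linarith
  have hs2 : 2 ≤ s := by
    rw [hs, le_div_iff₀ hrs]; linarith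
  have hs0 : 0 < s := by linarith
  set u := A ⟨f, hfM⟩ - a • f with hu
  set v := B ⟨f, hfN⟩ - b • f with hv
  have hAB : A ⟨f, hfM⟩ + B ⟨f, hfN⟩ = (u + v) + (a + b) • f := by
    rw [hu, hv]; module
  have hAB' : A ⟨f, hfM⟩ - B ⟨f, hfN⟩ = (u - v) + (a - b) • f := by
    rw [hu, hv]; module
  have hφ1 : φ (A ⟨f, hfM⟩ + B ⟨f, hfN⟩) = φ u + φ v := by
    rw [hAB, map_add, map_add, φ.map_smul, hφf, smul_zero]; ring
  have hφ2 : φ (A ⟨f, hfM⟩ - B ⟨f, hfN⟩) = φ u - φ v := by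
    rw [hAB', map_add, map_sub, φ.map_smul, hφf, smul_zero]; ring
  rw [hφ1, hφ2]
  -- bound |φ u| ≤ ‖u‖
  have hbound : ∀ x : Lp ℂ (ENNReal.ofReal p) μ, ‖φ x‖ ≤ ‖x‖ := fun x =>
    le_trans (φ.le_opNorm x) (by
      calc ‖φ‖ * ‖x‖ ≤ 1 * ‖x‖ := by gcongr
        _ = ‖x‖ := one_mul _)
  have h2pos : (0 : ℝ) < 2 ^ (s - 1) := Real.rpow_pos_of_pos (by norm_num) _
  rw [ge_iff_le, one_div, inv_mul_le_iff₀ h2pos]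
  calc ‖φ u + φ v‖ ^ s + ‖φ u - φ v‖ ^ s
      ≤ 2 ^ (s - 1) * (‖φ u‖ ^ s + ‖φ v‖ ^ s) := complex_clarkson_aux hs2 _ _
    _ ≤ 2 ^ (s - 1) * (‖u‖ ^ s + ‖v‖ ^ s) := by
        gcongr 2 ^ (s-1) * (?_ ^ s + ?_ ^ s) <;> exact hbound _
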